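/- Let A be a finitary abelian category over a finite field and let A, B, C, M be objects. Then the iterated Hall numbers satisfy the associativity identity Σ_{[X]} F_{AB}^X F_{XC}^M = Σ_{[Y]} F_{AY}^M F_{BC}^Y, where F_{AB}^M = |{X ⊆ M : X ≅ B, M/X ≅ A}| and the sums are over isomorphism classes of objects. -/

import Mathlib

open CategoryTheory CategoryTheory.Limits

/-- The Hall number `F_{AB}^M`: the number of subobjects `X ⊆ M` with `X ≅ B` and
`M/X ≅ A`. -/
noncomputable def hallNumber {C : Type*} [Category C] [Abelian C] (A B M : C) : ℕ :=
  Nat.card {X : Subobject M // Nonempty ((X : C) ≅ B) ∧ Nonempty (cokernel X.arrow ≅ A)}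

set_option linter.unusedSectionVars false
set_option maxHeartbeats 1600000
set_option synthInstance.maxHeartbeats 400000

namespace HallAssoc

open Subobject

variable {C : Type*} [Category C] [Abelian C]

lemma mk_iso_hom_comp {X X' M : C} (u : X' ≅ X) (f : X ⟶ M) [Mono f] :
    Subobject.mk (u.hom ≫ f) = Subobject.mk f :=
  Subobject.mk_eq_mk_of_comm _ _ u rfl

lemma kernelSubobject_cokernel_pi {M : C} (N : Subobject M) :
    kernelSubobject (cokernel.π N.arrow) = N := by
  refine le_antisymm ?_ (le_kernelSubobject _ _ (cokernel.condition _))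
  exact Subobject.le_of_comm
    (Abelian.monoLift N.arrow (kernelSubobject (cokernel.π N.arrow)).arrow
      (kernelSubobject_arrow_comp _))
    (Abelian.monoLift_comp _ _ _)

noncomputable def cokMkIso {X M : C} (f : X ⟶ M) [Mono f] :
    cokernel (Subobject.mk f).arrow ≅ cokernel f :=
  (cokernelIsoOfEq (underlyingIso_hom_comp_eq_mk f).symm).trans (cokernelEpiComp _ _)

/-- The set of subobjects counted by the Hall number. -/
def HallSet (A B M : C) : Type _ :=
  {X : Subobject M // Nonempty ((X : C) ≅ B) ∧ Nonempty (cokernel X.arrow ≅ A)}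

lemma hallNumber_eq (A B M : C) : hallNumber A B M = Nat.card (HallSet A B M) := rfl

lemma subIso_inj {B M : C} (X₁ X₂ : Subobject M) (e₁ : (X₁ : C) ≅ B) (e₂ : (X₂ : C) ≅ B)
    (h : e₁.inv ≫ X₁.arrow = e₂.inv ≫ X₂.arrow) : X₁ = X₂ := by
  apply le_antisymm
  · exact Subobject.le_of_comm (e₁.hom ≫ e₂.inv)
      (by rw [Category.assoc, ← h, Iso.hom_inv_id_assoc])
  · exact Subobject.le_of_comm (e₂.hom ≫ e₁.inv)
      (by rw [Category.assoc, h, Iso.hom_inv_id_assoc])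

lemma quotIso_inj {A M : C} (X₁ X₂ : Subobject M) (e₁ : cokernel X₁.arrow ≅ A)
    (e₂ : cokernel X₂.arrow ≅ A)
    (h : cokernel.π X₁.arrow ≫ e₁.hom = cokernel.π X₂.arrow ≫ e₂.hom) : X₁ = X₂ := by
  have k := congrArg (fun f : M ⟶ A => kernelSubobject f) h
  rw [kernelSubobject_comp_mono, kernelSubobject_comp_mono, kernelSubobject_cokernel_pi,
    kernelSubobject_cokernel_pi] at k
  exact k

section Fin
variable [∀ X Y : C, Finite (X ⟶ Y)]

lemma finite_subIso (B M : C) (P : Subobject M → Prop) :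
    Finite {X : Subobject M // Nonempty ((X : C) ≅ B) ∧ P X} := by
  refine Finite.of_injective
    (fun X => (X.2.1.some.inv ≫ X.1.arrow : B ⟶ M)) ?_
  intro X₁ X₂ h
  exact Subtype.ext (subIso_inj _ _ _ _ h)

lemma finite_subIso' (B M : C) : Finite {X : Subobject M // Nonempty ((X : C) ≅ B)} := by
  refine Finite.of_injective
    (fun X => (X.2.some.inv ≫ X.1.arrow : B ⟶ M)) ?_
  intro X₁ X₂ h
  exact Subtype.ext (subIso_inj _ _ _ _ h)

lemma finite_hallSet (A B M : C) : Finite (HallSet A B M) := finite_subIso B M _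

lemma finite_quotIso (A M : C) : Finite {X : Subobject M // Nonempty (cokernel X.arrow ≅ A)} := by
  refine Finite.of_injective
    (fun X => (cokernel.π X.1.arrow ≫ X.2.some.hom : M ⟶ A)) ?_
  intro X₁ X₂ h
  exact Subtype.ext (quotIso_inj _ _ _ _ h)

end Fin

/-- The transport of Hall sets along an isomorphism of ambient objects. -/
noncomputable def hallSetEquiv (A B : C) {M M' : C} (e : M ≅ M') :
    HallSet A B M ≃ HallSet A B M' where
  toFun X := ⟨Subobject.mk (X.1.arrow ≫ e.hom),
    ⟨(underlyingIso _).trans X.2.1.some⟩,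
    ⟨((cokMkIso _).trans (cokernelCompIsIso _ _)).trans X.2.2.some⟩⟩
  invFun X := ⟨Subobject.mk (X.1.arrow ≫ e.inv),
    ⟨(underlyingIso _).trans X.2.1.some⟩,
    ⟨((cokMkIso _).trans (cokernelCompIsIso _ _)).trans X.2.2.some⟩⟩
  left_inv X := by
    apply Subtype.ext
    dsimp only
    refine Subobject.mk_eq_of_comm _ (underlyingIso (X.1.arrow ≫ e.hom)) ?_
    rw [← underlyingIso_hom_comp_eq_mk (X.1.arrow ≫ e.hom), Category.assoc, Category.assoc,
      Iso.hom_inv_id, Category.comp_id]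
  right_inv X := by
    apply Subtype.ext
    dsimp only
    refine Subobject.mk_eq_of_comm _ (underlyingIso (X.1.arrow ≫ e.inv)) ?_
    rw [← underlyingIso_hom_comp_eq_mk (X.1.arrow ≫ e.inv), Category.assoc, Category.assoc,
      Iso.inv_hom_id, Category.comp_id]

lemma nonempty_iso_fromSkeleton_iff {X : C} {Y : Skeleton C} :
    Nonempty (X ≅ (fromSkeleton C).obj Y) ↔ toSkeleton X = Y := by
  constructor
  · rintro ⟨e⟩
    have h1 : toSkeleton X = toSkeleton ((fromSkeleton C).obj Y) := Quotient.sound ⟨e⟩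
    rw [h1]
    exact Quotient.out_eq Y
  · rintro rfl
    exact ⟨(fromSkeletonToSkeletonIso X).symm⟩


open Subobject

variable {C : Type*} [Category C] [Abelian C]

noncomputable def cokArrowCongr {M : C} {X Y : Subobject M} (h : X = Y) :
    cokernel X.arrow ≅ cokernel Y.arrow := by subst h; exact Iso.refl _

lemma ofLE_mk_comp {M : C} {N' : Subobject M} (Z : Subobject (N' : C))
    (h : Subobject.mk (Z.arrow ≫ N'.arrow) ≤ N') :
    ofLE _ N' h = (underlyingIso (Z.arrow ≫ N'.arrow)).hom ≫ Z.arrow := by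
  rw [← cancel_mono N'.arrow, ofLE_arrow, Category.assoc, underlyingIso_hom_comp_eq_mk]

lemma mk_le_of_le {M : C} {N' : Subobject M} (Z : Subobject (N' : C)) :
    Subobject.mk (Z.arrow ≫ N'.arrow) ≤ N' := by
  conv_rhs => rw [← Subobject.mk_arrow N']
  exact Subobject.mk_le_mk_of_comm Z.arrow rfl

lemma le_of_mk_le_mk {M : C} {N' : Subobject M} (Z₁ Z₂ : Subobject (N' : C))
    (h : Subobject.mk (Z₁.arrow ≫ N'.arrow) ≤ Subobject.mk (Z₂.arrow ≫ N'.arrow)) : Z₁ ≤ Z₂ :=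
  Subobject.le_of_comm (ofMkLEMk _ _ h)
    (by rw [← cancel_mono N'.arrow, Category.assoc, ofMkLEMk_comp])

/-- Lifting through a strong epi: if `q ≫ K.arrow` factors through `I.arrow` then `K ≤ I`. -/
lemma le_of_epi_factor {X : C} {K I : Subobject X} {T : C} (q : T ⟶ (K : C)) [Epi q]
    (u : T ⟶ (I : C)) (w : u ≫ I.arrow = q ≫ K.arrow) : K ≤ I := by
  haveI : StrongEpi q := strongEpi_of_epi _
  have sq : CommSq u q I.arrow K.arrow := ⟨w⟩
  exact Subobject.le_of_comm sq.lift sq.fac_right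

/-- Core diagram chase: if the images of `W` and `N'` in `M/N` satisfy `im W ≤ im N'`
(witnessed by maps to a common mono `m`), and `N ≤ N'`, then `W ≤ N'`. -/
lemma le_of_image_le {M : C} {N N' W : Subobject M} (h : N ≤ N')
    {K' : C} (m : K' ⟶ cokernel N.arrow) [Mono m]
    (e : (N' : C) ⟶ K') [Epi e] (he : e ≫ m = N'.arrow ≫ cokernel.π N.arrow)
    (s : (W : C) ⟶ K') (hs : s ≫ m = W.arrow ≫ cokernel.π N.arrow) :
    W ≤ N' := by
  have hd : (pullback.fst e s ≫ N'.arrow - pullback.snd e s ≫ W.arrow) ≫ cokernel.π N.arrow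
      = 0 := by
    rw [Preadditive.sub_comp, Category.assoc, Category.assoc, ← he, ← hs,
      ← Category.assoc, ← Category.assoc, pullback.condition, sub_self]
  have ht := Abelian.monoLift_comp N.arrow _ hd
  refine le_of_epi_factor (pullback.snd e s)
    (pullback.fst e s - Abelian.monoLift N.arrow _ hd ≫ ofLE N N' h) ?_
  rw [Preadditive.sub_comp, Category.assoc, ofLE_arrow, ht, sub_sub_cancel]

/-- Any morphism composed with the cokernel projection of its image vanishes. -/
lemma comp_cokernel_pi_imageSubobject {X Y : C} (f : X ⟶ Y) :
    f ≫ cokernel.π (imageSubobject f).arrow = 0 := by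
  have h : f ≫ cokernel.π (imageSubobject f).arrow
      = factorThruImageSubobject f ≫ (imageSubobject f).arrow
        ≫ cokernel.π (imageSubobject f).arrow := by
    rw [← Category.assoc, imageSubobject_arrow_comp]
  rw [h, cokernel.condition, comp_zero]

section Correspondence

variable {M : C} (N : Subobject M)

local notation "π" => cokernel.π (Subobject.arrow N)

lemma kernel_arrow_comp_pi (N' : Subobject M) (h : N ≤ N') :
    kernelSubobject (N'.arrow ≫ π) = Subobject.mk (ofLE N N' h) := by
  refine le_antisymm ?_ ?_
  · refine Subobject.le_mk_of_comm
      (Abelian.monoLift N.arrow ((kernelSubobject (N'.arrow ≫ π)).arrow ≫ N'.arrow)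
        (by rw [Category.assoc, kernelSubobject_arrow_comp])) ?_
    rw [← cancel_mono N'.arrow, Category.assoc, ofLE_arrow, Abelian.monoLift_comp]
  · refine le_kernelSubobject _ _ ?_
    rw [← Category.assoc, ← underlyingIso_hom_comp_eq_mk (ofLE N N' h)]
    rw [Category.assoc, Category.assoc, ofLE_arrow_assoc, cokernel.condition, comp_zero]

/-- Third isomorphism theorem ingredient: `cokernel (N' ⟶ M ⟶ M/N) ≅ M/N'` for `N ≤ N'`. -/
noncomputable def cokernelCompPiIso (N' : Subobject M) (h : N ≤ N') :
    cokernel (N'.arrow ≫ π) ≅ cokernel N'.arrow where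
  hom := cokernel.desc _ (cokernel.desc N.arrow (cokernel.π N'.arrow)
      (by rw [← ofLE_arrow h, Category.assoc, cokernel.condition, comp_zero]))
    (by rw [Category.assoc, cokernel.π_desc, cokernel.condition])
  inv := cokernel.desc _ (π ≫ cokernel.π (N'.arrow ≫ π))
    (by rw [← Category.assoc]; exact cokernel.condition _)
  hom_inv_id := by
    rw [← cancel_epi (cokernel.π (N'.arrow ≫ π))]
    simp only [cokernel.π_desc_assoc, Category.comp_id]
    rw [← cancel_epi (cokernel.π N.arrow)]
    simp only [cokernel.π_desc_assoc, cokernel.π_desc]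
  inv_hom_id := by
    rw [← cancel_epi (cokernel.π N'.arrow)]
    simp only [cokernel.π_desc_assoc, Category.assoc, cokernel.π_desc, Category.comp_id]

lemma kernel_pi_comp_cokernel_image (N' : Subobject M) (h : N ≤ N') :
    kernelSubobject (π ≫ cokernel.π (imageSubobject (N'.arrow ≫ π)).arrow) = N' := by
  refine le_antisymm ?_ ?_
  · have hκ0 : ((kernelSubobject (π ≫ cokernel.π (imageSubobject (N'.arrow ≫ π)).arrow)).arrow
        ≫ π) ≫ cokernel.π (imageSubobject (N'.arrow ≫ π)).arrow = 0 := by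
      rw [Category.assoc]; exact kernelSubobject_arrow_comp _
    exact le_of_image_le h (imageSubobject (N'.arrow ≫ π)).arrow
      (factorThruImageSubobject _) (imageSubobject_arrow_comp _)
      (Abelian.monoLift _ _ hκ0) (Abelian.monoLift_comp _ _ _)
  · refine le_kernelSubobject _ _ ?_
    rw [← Category.assoc]; exact comp_cokernel_pi_imageSubobject _

lemma image_kernel_arrow_comp_pi (K : Subobject (cokernel N.arrow)) :
    imageSubobject ((kernelSubobject (π ≫ cokernel.π K.arrow)).arrow ≫ π) = K := by
  have hκ0 : ((kernelSubobject (π ≫ cokernel.π K.arrow)).arrow ≫ π) ≫ cokernel.π K.arrow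
      = 0 := by
    rw [Category.assoc]; exact kernelSubobject_arrow_comp _
  refine le_antisymm
    (imageSubobject_le _ (Abelian.monoLift K.arrow _ hκ0) (Abelian.monoLift_comp _ _ _)) ?_
  have h2 : pullback.snd K.arrow π ≫ π ≫ cokernel.π K.arrow = 0 := by
    rw [← Category.assoc, ← pullback.condition, Category.assoc, cokernel.condition, comp_zero]
  refine le_of_epi_factor (pullback.fst K.arrow π)
    (factorThruKernelSubobject (π ≫ cokernel.π K.arrow) (pullback.snd K.arrow π) h2
      ≫ factorThruImageSubobject _) ?_
  rw [Category.assoc, imageSubobject_arrow_comp, ← Category.assoc,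
    factorThruKernelSubobject_comp_arrow, pullback.condition]

/-- Second isomorphism theorem: `N'/N ≅ image of N' in M/N`. -/
noncomputable def cokernelOfLEIsoImage (N' : Subobject M) (h : N ≤ N') :
    cokernel (ofLE N N' h) ≅ (imageSubobject (N'.arrow ≫ π) : C) :=
  (cokMkIso (ofLE N N' h)).symm.trans <|
    (cokArrowCongr (kernel_arrow_comp_pi N N' h)).symm.trans <|
      (cokernelIsoOfEq (kernelSubobject_arrow _).symm).trans <|
        (cokernelEpiComp _ _).trans <|
          (Abelian.coimageIsoImage' (N'.arrow ≫ π)).trans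
            (imageSubobjectIso (N'.arrow ≫ π)).symm

noncomputable def cokernelImageArrowIso (N' : Subobject M) (h : N ≤ N') :
    cokernel (imageSubobject (N'.arrow ≫ π)).arrow ≅ cokernel N'.arrow :=
  (cokMkIso _).trans <| (cokernelImageι _).trans (cokernelCompPiIso N N' h)

end Correspondence

section Chains

variable (A B D M : C)

/-- A two–step filtration `N ≤ N' ≤ M` with prescribed subquotients. -/
structure Chain where
  N : Subobject M
  N' : Subobject M
  le : N ≤ N'
  isoD : Nonempty ((N : C) ≅ D)
  isoB : Nonempty (cokernel (Subobject.ofLE N N' le) ≅ B)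
  isoA : Nonempty (cokernel N'.arrow ≅ A)

variable {A B D M}

lemma Chain.ext' {c₁ c₂ : Chain A B D M} (h1 : c₁.N = c₂.N) (h2 : c₁.N' = c₂.N') : c₁ = c₂ := by
  cases c₁; cases c₂; dsimp at h1 h2; subst h1; subst h2; rfl

variable (A B D M)

abbrev SD := {N : Subobject M // Nonempty ((N : C) ≅ D)}
abbrev SA := {N' : Subobject M // Nonempty (cokernel N'.arrow ≅ A)}

variable {A B D M}

/-- From a pair `(N', Z ⊆ N')` build a chain. -/
noncomputable def toChainR (x : Σ n : SA A M, HallSet B D (n.1 : C)) : Chain A B D M where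
  N := Subobject.mk (x.2.1.arrow ≫ x.1.1.arrow)
  N' := x.1.1
  le := mk_le_of_le _
  isoD := ⟨(underlyingIso _).trans x.2.2.1.some⟩
  isoB := ⟨(cokernelIsoOfEq (ofLE_mk_comp x.2.1 (mk_le_of_le _))).trans
    ((cokernelEpiComp _ _).trans x.2.2.2.some)⟩
  isoA := x.1.2

lemma toChainR_bij : Function.Bijective (toChainR (A := A) (B := B) (D := D) (M := M)) := by
  constructor
  · rintro ⟨⟨N₁, hA₁⟩, ⟨Z₁, hZ₁⟩⟩ ⟨⟨N₂, hA₂⟩, ⟨Z₂, hZ₂⟩⟩ h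
    have hN : N₁ = N₂ := congrArg Chain.N' h
    subst hN
    have hmk : Subobject.mk (Z₁.arrow ≫ N₁.arrow) = Subobject.mk (Z₂.arrow ≫ N₁.arrow) :=
      congrArg Chain.N h
    have hZ : Z₁ = Z₂ := le_antisymm (le_of_mk_le_mk _ _ hmk.le) (le_of_mk_le_mk _ _ hmk.ge)
    subst hZ
    rfl
  · intro c
    refine ⟨⟨⟨c.N', c.isoA⟩, ⟨Subobject.mk (ofLE c.N c.N' c.le),
      ⟨(underlyingIso _).trans c.isoD.some⟩, ⟨(cokMkIso _).trans c.isoB.some⟩⟩⟩, ?_⟩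
    refine Chain.ext' ?_ rfl
    refine Subobject.mk_eq_of_comm _ (underlyingIso (ofLE c.N c.N' c.le)) ?_
    dsimp only
    simp only [← underlyingIso_hom_comp_eq_mk (ofLE c.N c.N' c.le), Category.assoc, ofLE_arrow]

/-- From a pair `(N, K ⊆ M/N)` build a chain. -/
noncomputable def toChainL (x : Σ n : SD D M, HallSet A B (cokernel (Subobject.arrow n.1))) :
    Chain A B D M :=
  have hle : x.1.1 ≤ kernelSubobject (cokernel.π x.1.1.arrow ≫ cokernel.π x.2.1.arrow) :=
    le_kernelSubobject _ _ (by rw [← Category.assoc, cokernel.condition, zero_comp])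
  { N := x.1.1
    N' := kernelSubobject (cokernel.π x.1.1.arrow ≫ cokernel.π x.2.1.arrow)
    le := hle
    isoD := x.1.2
    isoB := ⟨((cokernelOfLEIsoImage x.1.1 _ hle).trans
        (Subobject.isoOfEq _ _ (image_kernel_arrow_comp_pi x.1.1 x.2.1))).trans x.2.2.1.some⟩
    isoA := ⟨((cokernelImageArrowIso x.1.1 _ hle).symm.trans
        (cokArrowCongr (image_kernel_arrow_comp_pi x.1.1 x.2.1))).trans x.2.2.2.some⟩ }

lemma toChainL_bij : Function.Bijective (toChainL (A := A) (B := B) (D := D) (M := M)) := by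
  constructor
  · rintro ⟨⟨N₁, hD₁⟩, ⟨K₁, hK₁⟩⟩ ⟨⟨N₂, hD₂⟩, ⟨K₂, hK₂⟩⟩ h
    have hN : N₁ = N₂ := congrArg Chain.N h
    subst hN
    have hN' : kernelSubobject (cokernel.π N₁.arrow ≫ cokernel.π K₁.arrow)
        = kernelSubobject (cokernel.π N₁.arrow ≫ cokernel.π K₂.arrow) := congrArg Chain.N' h
    have h1 := image_kernel_arrow_comp_pi N₁ K₁
    rw [hN'] at h1
    rw [image_kernel_arrow_comp_pi N₁ K₂] at h1
    subst h1
    rfl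
  · intro c
    refine ⟨⟨⟨c.N, c.isoD⟩, ⟨imageSubobject (c.N'.arrow ≫ cokernel.π c.N.arrow),
      ⟨(cokernelOfLEIsoImage c.N c.N' c.le).symm.trans c.isoB.some⟩,
      ⟨(cokernelImageArrowIso c.N c.N' c.le).trans c.isoA.some⟩⟩⟩, ?_⟩
    exact Chain.ext' rfl (kernel_pi_comp_cokernel_image c.N c.N' c.le)

section Counting

def sigmaSubtypeEquiv {α : Type*} {T : α → Type*} (P : α → Prop) :
    {x : Σ a : α, T a // P x.1} ≃ Σ a : {a : α // P a}, T a.1 where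
  toFun x := ⟨⟨x.1.1, x.2⟩, x.1.2⟩
  invFun y := ⟨⟨y.1.1, y.2⟩, y.1.2⟩
  left_inv := by rintro ⟨⟨a, t⟩, h⟩; rfl
  right_inv := by rintro ⟨⟨a, h⟩, t⟩; rfl

lemma card_sigma_const {S : Type*} {T : S → Type*} {T₀ : Type*}
    (h : ∀ s, Nonempty (T s ≃ T₀)) :
    Nat.card (Σ s, T s) = Nat.card S * Nat.card T₀ := by
  have e : (Σ s, T s) ≃ S × T₀ :=
    (Equiv.sigmaCongrRight fun s => (h s).some).trans (Equiv.sigmaEquivProd S T₀)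
  rw [Nat.card_congr e, Nat.card_prod]

lemma finsum_card_fiber {γ : Type*} {ι : Type*} [Finite γ] (g : γ → ι) :
    ∑ᶠ i, Nat.card {a : γ // g a = i} = Nat.card γ := by
  classical
  cases nonempty_fintype γ
  have hsupp : (Function.support fun i => Nat.card {a : γ // g a = i})
      ⊆ ↑(Finset.univ.image g) := by
    intro i hi
    rw [Function.mem_support] at hi
    obtain ⟨a, ha⟩ := (Nat.card_ne_zero.mp hi).1
    exact Finset.mem_coe.mpr (Finset.mem_image.mpr ⟨a, Finset.mem_univ a, ha⟩)
  rw [finsum_eq_finset_sum_of_support_subset _ hsupp, Nat.card_eq_fintype_card,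
    ← Finset.card_univ,
    Finset.card_eq_sum_card_fiberwise (fun a _ => Finset.mem_image_of_mem g (Finset.mem_univ a))]
  refine Finset.sum_congr rfl fun i _ => ?_
  rw [Nat.card_eq_fintype_card, Fintype.card_subtype]

variable [∀ X Y : C, Finite (X ⟶ Y)]

lemma finite_chain : Finite (Chain A B D M) := by
  haveI := finite_subIso' D M
  haveI := finite_quotIso A M
  refine Finite.of_injective (fun c : Chain A B D M =>
    ((⟨c.N, c.isoD⟩ : SD D M), (⟨c.N', c.isoA⟩ : SA A M))) ?_
  intro c₁ c₂ h
  exact Chain.ext' (congrArg (fun p => p.1.1) h) (congrArg (fun p => p.2.1) h)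

lemma count_R (Y : Skeleton C) :
    hallNumber A ((fromSkeleton C).obj Y) M * hallNumber B D ((fromSkeleton C).obj Y)
      = Nat.card {c : Chain A B D M // toSkeleton ((c.N' : C)) = Y} := by
  classical
  haveI := finite_quotIso A M
  have e1 : {c : Chain A B D M // toSkeleton ((c.N' : C)) = Y}
      ≃ {x : Σ n : SA A M, HallSet B D (n.1 : C) // toSkeleton ((x.1.1 : C)) = Y} :=
    (Equiv.subtypeEquiv (Equiv.ofBijective _ toChainR_bij) (fun _ => Iff.rfl)).symm
  have e2 := sigmaSubtypeEquiv (T := fun n : SA A M => HallSet B D (n.1 : C))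
    (fun n => toSkeleton ((n.1 : C)) = Y)
  rw [Nat.card_congr (e1.trans e2),
    card_sigma_const (T₀ := HallSet B D ((fromSkeleton C).obj Y))
      (fun n => ⟨hallSetEquiv B D (nonempty_iso_fromSkeleton_iff.mpr n.2).some⟩),
    hallNumber_eq, hallNumber_eq]
  congr 1
  refine Nat.card_congr ⟨fun X => ⟨⟨X.1, X.2.2⟩, nonempty_iso_fromSkeleton_iff.mp X.2.1⟩,
    fun n => ⟨n.1.1, nonempty_iso_fromSkeleton_iff.mpr n.2, n.1.2⟩,
    fun X => rfl, fun n => rfl⟩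

lemma count_L (Y : Skeleton C) :
    hallNumber A B ((fromSkeleton C).obj Y) * hallNumber ((fromSkeleton C).obj Y) D M
      = Nat.card {c : Chain A B D M // toSkeleton (cokernel c.N.arrow) = Y} := by
  classical
  haveI := finite_subIso' D M
  have e1 : {c : Chain A B D M // toSkeleton (cokernel c.N.arrow) = Y}
      ≃ {x : Σ n : SD D M, HallSet A B (cokernel (Subobject.arrow n.1)) //
          toSkeleton (cokernel (Subobject.arrow x.1.1)) = Y} :=
    (Equiv.subtypeEquiv (Equiv.ofBijective _ toChainL_bij) (fun _ => Iff.rfl)).symm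
  have e2 := sigmaSubtypeEquiv (T := fun n : SD D M => HallSet A B (cokernel (Subobject.arrow n.1)))
    (fun n => toSkeleton (cokernel (Subobject.arrow n.1)) = Y)
  rw [Nat.card_congr (e1.trans e2),
    card_sigma_const (T₀ := HallSet A B ((fromSkeleton C).obj Y))
      (fun n => ⟨hallSetEquiv A B (nonempty_iso_fromSkeleton_iff.mpr n.2).some⟩),
    hallNumber_eq, hallNumber_eq, mul_comm]
  congr 1
  refine Nat.card_congr ⟨fun X => ⟨⟨X.1, X.2.1⟩, nonempty_iso_fromSkeleton_iff.mp X.2.2⟩,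
    fun n => ⟨n.1.1, n.1.2, nonempty_iso_fromSkeleton_iff.mpr n.2⟩,
    fun X => rfl, fun n => rfl⟩

end Counting
end Chains

end HallAssoc

/-- Associativity of Hall numbers in a finitary abelian category:
`Σ_{[X]} F_{AB}^X F_{XC}^M = Σ_{[Y]} F_{AY}^M F_{BC}^Y`, the sums running over the
isomorphism classes of objects (represented by a skeleton of the category). -/
theorem hallNumber_assoc
    (C : Type*) [Category C] [Abelian C]
    [∀ X Y : C, Finite (X ⟶ Y)]
    (A B D M : C) :
    ∑ᶠ X : Skeleton C,
        hallNumber A B ((fromSkeleton C).obj X) * hallNumber ((fromSkeleton C).obj X) D M =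
      ∑ᶠ Y : Skeleton C,
        hallNumber A ((fromSkeleton C).obj Y) M * hallNumber B D ((fromSkeleton C).obj Y) := by
  classical
  haveI : Finite (HallAssoc.Chain A B D M) := HallAssoc.finite_chain
  calc
    (∑ᶠ X : Skeleton C,
        hallNumber A B ((fromSkeleton C).obj X) * hallNumber ((fromSkeleton C).obj X) D M)
        = ∑ᶠ X : Skeleton C,
            Nat.card {c : HallAssoc.Chain A B D M // toSkeleton (cokernel c.N.arrow) = X} :=
      finsum_congr fun X => HallAssoc.count_L X
    _ = Nat.card (HallAssoc.Chain A B D M) := HallAssoc.finsum_card_fiber _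
    _ = ∑ᶠ Y : Skeleton C,
          Nat.card {c : HallAssoc.Chain A B D M // toSkeleton ((c.N' : C)) = Y} :=
      (HallAssoc.finsum_card_fiber _).symm
    _ = ∑ᶠ Y : Skeleton C,
          hallNumber A ((fromSkeleton C).obj Y) M * hallNumber B D ((fromSkeleton C).obj Y) :=
      finsum_congr fun Y => (HallAssoc.count_R Y).symm
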